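/- Let ρ₀ = |ρ₀⟩⟨ρ₀| and ρ₁ = |ρ₁⟩⟨ρ₁| be rank-1 density matrices on a 2-dimensional space with |ρ₀⟩ = √(1-δ²)|ρ₁⟩ + δ|ρ₁⊥⟩ for some 0 ≤ δ ≤ 1, where ρ₁⊥ = I - ρ₁. Let 0 ≤ ε < 1/2 and z_b ≥ 0, and set z = 16·((1-ε)/(1-ε/2))·z_b + 4/(1-ε). Then 4δ²·ρ₁⊥·(1/2)(1+εz_b) ⪰ (1/4)[(1 + (ε/2)z)ρ₀ + (1 - (1-ε/2)z)ρ₁] as 2×2 Hermitian matrices. -/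

import Mathlib

open scoped ComplexOrder
open scoped Matrix


section polyfacts
variable {e b t : ℝ}

lemma pf_zp (he1 : e < 1/2) (hb : 0 ≤ b) : (0:ℝ) ≤ 32*(1-e)^2*b + 4*(2-e) := by
  nlinarith [mul_nonneg hb (sq_nonneg (1-e))]

lemma pf_A0 (he1 : e < 1/2) (hb : 0 ≤ b) :
    (0:ℝ) ≤ -2*(2-e)*(1-e) + (32*(1-e)^2*b+4*(2-e))*(1-e) := by
  nlinarith [mul_nonneg hb (mul_nonneg (sq_nonneg (1-e)) (by linarith : (0:ℝ) ≤ 1-e))]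

lemma pf_Adiff (he0 : 0 ≤ e) (he1 : e < 1/2) (hb : 0 ≤ b) (ht : 0 ≤ t) :
    (0:ℝ) ≤ (t-2)*(2-e)*(1-e) + (32*(1-e)^2*b+4*(2-e))*((1-e)+(e/2)*t)
      - (-2*(2-e)*(1-e) + (32*(1-e)^2*b+4*(2-e))*(1-e)) := by
  have t1 : (0:ℝ) ≤ t*((2-e)*(1-e)) := mul_nonneg ht (by nlinarith)
  have t2 : (0:ℝ) ≤ (32*(1-e)^2*b+4*(2-e))*((e/2)*t) :=
    mul_nonneg (pf_zp he1 hb) (mul_nonneg (by linarith) ht)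
  nlinarith [t1, t2]

lemma pf_K (he0 : 0 ≤ e) (he1 : e < 1/2) (hb : 0 ≤ b) :
    (0:ℝ) ≤ 8*(1+e*b)*(2-e)*(1-e) - (2-e)*(1-e) - (e/2)*(32*(1-e)^2*b+4*(2-e)) := by
  nlinarith [mul_nonneg (mul_nonneg he0 he0) (mul_nonneg hb (by linarith : (0:ℝ) ≤ 1-e))]

lemma pf_c0 (he0 : 0 ≤ e) (he1 : e < 1/2) (hb : 0 ≤ b) :
    (0:ℝ) ≤ (2-e)*(1-e) + (e/2)*(32*(1-e)^2*b+4*(2-e)) := by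
  nlinarith [mul_nonneg he0 (pf_zp he1 hb)]

lemma pf_main (he0 : 0 ≤ e) (he1 : e < 1/2) (hb : 0 ≤ b) :
    ((2-e)*(1-e) + (e/2)*(32*(1-e)^2*b+4*(2-e)))^2
      ≤ (-2*(2-e)*(1-e) + (32*(1-e)^2*b+4*(2-e))*(1-e))
        * (8*(1+e*b)*(2-e)*(1-e) - (2-e)*(1-e) - (e/2)*(32*(1-e)^2*b+4*(2-e))) := by
  have h1a : (0:ℝ) ≤ 224-544*e+272*e^2 := by nlinarith [sq_nonneg (2*e-1)]
  have h0a : (0:ℝ) ≤ 17*e^2-34*e+13 := by nlinarith [sq_nonneg (2*e-1)]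
  have h1 : 0 ≤ b*((2-e)*(1-e)^2*(224-544*e+272*e^2)) :=
    mul_nonneg hb (mul_nonneg (mul_nonneg (by linarith) (sq_nonneg _)) h1a)
  have h0 : 0 ≤ (2-e)^2*(17*e^2-34*e+13) := mul_nonneg (sq_nonneg _) h0a
  nlinarith [h1, h0]

/-- full product inequality at the polynomial level -/
lemma pf_prod (he0 : 0 ≤ e) (he1 : e < 1/2) (hb : 0 ≤ b) (ht : 0 ≤ t) (ht1 : t ≤ 1) :
    ((2-e)*(1-e) + (e/2)*(32*(1-e)^2*b+4*(2-e)))^2 * ((1-t)*t)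
      ≤ ((t-2)*(2-e)*(1-e) + (32*(1-e)^2*b+4*(2-e))*((1-e)+(e/2)*t))
        * (t * (8*(1+e*b)*(2-e)*(1-e) - (2-e)*(1-e) - (e/2)*(32*(1-e)^2*b+4*(2-e)))) := by
  have t1 := mul_nonneg (mul_nonneg ht (pf_K he0 he1 hb)) (pf_Adiff he0 he1 hb ht)
  have t2 := mul_nonneg ht (sub_nonneg.2 (pf_main he0 he1 hb))
  have t3 : 0 ≤ ((2-e)*(1-e) + (e/2)*(32*(1-e)^2*b+4*(2-e)))^2 * (t*t) :=
    mul_nonneg (sq_nonneg _) (mul_nonneg ht ht)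
  nlinarith [t1, t2, t3]

end polyfacts

lemma quadstep (A C B P2 Q2 r : ℝ) (hA : 0 ≤ A) (hC : 0 ≤ C) (hB : 0 ≤ B)
    (hACB : B^2 ≤ A*C) (hP2 : 0 ≤ P2) (hQ2 : 0 ≤ Q2) (hr : r^2 ≤ P2*Q2) :
    2*B*r ≤ A*P2 + C*Q2 := by
  nlinarith [mul_nonneg (mul_nonneg hB hB) (sub_nonneg.2 hr),
    mul_nonneg (sub_nonneg.2 hACB) (mul_nonneg hP2 hQ2),
    sq_nonneg (A*P2 - C*Q2), mul_nonneg hA hP2, mul_nonneg hC hQ2]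

lemma realkey (δ ε z_b z P2 Q2 NR r s : ℝ)
    (hδ0 : 0 ≤ δ) (hδ1 : δ ≤ 1) (hε0 : 0 ≤ ε) (hε1 : ε < 1/2) (hzb : 0 ≤ z_b)
    (hz : z = 16 * ((1 - ε) / (1 - ε/2)) * z_b + 4 / (1 - ε))
    (hs : 0 ≤ s) (hs2 : s^2 = 1 - δ^2)
    (hP2 : 0 ≤ P2) (hQ2 : 0 ≤ Q2) (hr : r^2 ≤ P2*Q2) (hN : P2 + Q2 ≤ NR) :
    0 ≤ 4*δ^2*((1/2)*(1+ε*z_b))*NR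
        - (4*δ^2*((1/2)*(1+ε*z_b)) + (1/4)*(1-(1-ε/2)*z))*P2
        - ((1/4)*(1+(ε/2)*z))*(s^2*P2 + δ^2*Q2 + 2*(s*δ)*r) := by
  rw [hs2]
  have hm : (0:ℝ) < 1 - ε/2 := by linarith
  have hn : (0:ℝ) < 1 - ε := by linarith
  have hzeq : z*((2-ε)*(1-ε)) = 32*(1-ε)^2*z_b + 4*(2-ε) := by
    have h2e : (2:ℝ) - ε ≠ 0 := by linarith
    rw [hz]; field_simp [h2e]; ring
  have hd2 : 0 ≤ δ^2 := sq_nonneg δ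
  have hd2' : δ^2 ≤ 1 := by nlinarith
  have h1z : (0:ℝ) ≤ 1 + ε*z_b := by positivity
  have hX : (0:ℝ) < 4*((2-ε)*(1-ε)) := by nlinarith
  have hAX : (-((1/4)*(1-(1-ε/2)*z)) - ((1/4)*(1+(ε/2)*z))*(1-δ^2)) * (4*((2-ε)*(1-ε)))
      = (δ^2-2)*(2-ε)*(1-ε) + (32*(1-ε)^2*z_b+4*(2-ε))*((1-ε)+(ε/2)*δ^2) := by
    linear_combination ((1-ε) + ε/2*δ^2) * hzeq
  have hCX : (2*δ^2*(1+ε*z_b) - ((1/4)*(1+(ε/2)*z))*δ^2) * (4*((2-ε)*(1-ε)))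
      = δ^2 * (8*(1+ε*z_b)*(2-ε)*(1-ε) - (2-ε)*(1-ε)
        - (ε/2)*(32*(1-ε)^2*z_b+4*(2-ε))) := by
    linear_combination (-(δ^2)*ε/2) * hzeq
  have hc0X : ((1/4)*(1+(ε/2)*z)) * (4*((2-ε)*(1-ε)))
      = (2-ε)*(1-ε) + (ε/2)*(32*(1-ε)^2*z_b+4*(2-ε)) := by
    linear_combination (ε/2) * hzeq
  have hA : 0 ≤ -((1/4)*(1-(1-ε/2)*z)) - ((1/4)*(1+(ε/2)*z))*(1-δ^2) := by
    have h := pf_A0 hε1 hzb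
    have h2 := pf_Adiff hε0 hε1 hzb hd2
    refine (mul_nonneg_iff_of_pos_right hX).mp ?_
    rw [hAX]; linarith
  have hC : 0 ≤ 2*δ^2*(1+ε*z_b) - ((1/4)*(1+(ε/2)*z))*δ^2 := by
    refine (mul_nonneg_iff_of_pos_right hX).mp ?_
    rw [hCX]; exact mul_nonneg hd2 (pf_K hε0 hε1 hzb)
  have hc0 : 0 ≤ (1/4)*(1+(ε/2)*z) := by
    refine (mul_nonneg_iff_of_pos_right hX).mp ?_
    rw [hc0X]; exact pf_c0 hε0 hε1 hzb
  have hB : 0 ≤ ((1/4)*(1+(ε/2)*z))*(s*δ) := mul_nonneg hc0 (mul_nonneg hs hδ0)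
  have hACB : (((1/4)*(1+(ε/2)*z))*(s*δ))^2
      ≤ (-((1/4)*(1-(1-ε/2)*z)) - ((1/4)*(1+(ε/2)*z))*(1-δ^2))
        * (2*δ^2*(1+ε*z_b) - ((1/4)*(1+(ε/2)*z))*δ^2) := by
    have hprod := pf_prod hε0 hε1 hzb hd2 hd2'
    have hBX : ((((1/4)*(1+(ε/2)*z))*(s*δ)) * (4*((2-ε)*(1-ε))))^2
        = ((2-ε)*(1-ε) + (ε/2)*(32*(1-ε)^2*z_b+4*(2-ε)))^2 * ((1-δ^2)*δ^2) := by
      have h : ((((1/4)*(1+(ε/2)*z))*(s*δ)) * (4*((2-ε)*(1-ε))))^2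
          = (((1/4)*(1+(ε/2)*z)) * (4*((2-ε)*(1-ε))))^2 * (s^2*δ^2) := by ring
      rw [h, hc0X, hs2]
    have step : (((1/4)*(1+(ε/2)*z))*(s*δ))^2 * (4*((2-ε)*(1-ε)))^2
        ≤ ((-((1/4)*(1-(1-ε/2)*z)) - ((1/4)*(1+(ε/2)*z))*(1-δ^2))
          * (2*δ^2*(1+ε*z_b) - ((1/4)*(1+(ε/2)*z))*δ^2)) * (4*((2-ε)*(1-ε)))^2 := by
      calc (((1/4)*(1+(ε/2)*z))*(s*δ))^2 * (4*((2-ε)*(1-ε)))^2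
          = ((((1/4)*(1+(ε/2)*z))*(s*δ)) * (4*((2-ε)*(1-ε))))^2 := by ring
        _ = ((2-ε)*(1-ε) + (ε/2)*(32*(1-ε)^2*z_b+4*(2-ε)))^2 * ((1-δ^2)*δ^2) := hBX
        _ ≤ ((δ^2-2)*(2-ε)*(1-ε) + (32*(1-ε)^2*z_b+4*(2-ε))*((1-ε)+(ε/2)*δ^2))
            * (δ^2 * (8*(1+ε*z_b)*(2-ε)*(1-ε) - (2-ε)*(1-ε)
              - (ε/2)*(32*(1-ε)^2*z_b+4*(2-ε)))) := hprod
        _ = (((-((1/4)*(1-(1-ε/2)*z)) - ((1/4)*(1+(ε/2)*z))*(1-δ^2))) * (4*((2-ε)*(1-ε))))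
            * (((2*δ^2*(1+ε*z_b) - ((1/4)*(1+(ε/2)*z))*δ^2)) * (4*((2-ε)*(1-ε)))) := by
            rw [hAX, hCX]
        _ = ((-((1/4)*(1-(1-ε/2)*z)) - ((1/4)*(1+(ε/2)*z))*(1-δ^2))
          * (2*δ^2*(1+ε*z_b) - ((1/4)*(1+(ε/2)*z))*δ^2)) * (4*((2-ε)*(1-ε)))^2 := by ring
    exact le_of_mul_le_mul_right step (by positivity)
  have hmain := quadstep _ _ _ P2 Q2 r hA hC hB hACB hP2 hQ2 hr
  have hbes : 0 ≤ 2*δ^2*(1+ε*z_b)*(NR - (P2+Q2)) :=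
    mul_nonneg (by positivity) (by linarith)
  have hid : 4*δ^2*((1/2)*(1+ε*z_b))*NR
        - (4*δ^2*((1/2)*(1+ε*z_b)) + (1/4)*(1-(1-ε/2)*z))*P2
        - ((1/4)*(1+(ε/2)*z))*((1-δ^2)*P2 + δ^2*Q2 + 2*(s*δ)*r)
      = 2*δ^2*(1+ε*z_b)*(NR - (P2+Q2))
        + ((-((1/4)*(1-(1-ε/2)*z)) - ((1/4)*(1+(ε/2)*z))*(1-δ^2))*P2
          + (2*δ^2*(1+ε*z_b) - ((1/4)*(1+(ε/2)*z))*δ^2)*Q2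
          - 2*(((1/4)*(1+(ε/2)*z))*(s*δ))*r) := by ring
  rw [hid]; linarith [hmain, hbes]

open scoped ComplexOrder
open scoped Matrix

lemma complexkey (δ ε z_b z s : ℝ)
    (v u : Fin 2 → ℂ)
    (hv : star v ⬝ᵥ v = 1) (hu : star u ⬝ᵥ u = 1) (hvu : star v ⬝ᵥ u = 0)
    (hreal : ∀ P2 Q2 NR r : ℝ, 0 ≤ P2 → 0 ≤ Q2 → r^2 ≤ P2*Q2 → P2 + Q2 ≤ NR →
      0 ≤ 4*δ^2*((1/2)*(1+ε*z_b))*NR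
        - (4*δ^2*((1/2)*(1+ε*z_b)) + (1/4)*(1-(1-ε/2)*z))*P2
        - ((1/4)*(1+(ε/2)*z))*(s^2*P2 + δ^2*Q2 + 2*(s*δ)*r)) :
    (((4 * δ^2 * ((1/2) * (1 + ε * z_b)) : ℝ) : ℂ) •
        ((1 : Matrix (Fin 2) (Fin 2) ℂ) - Matrix.vecMulVec v (star v)) -
      (((1/4 : ℝ) : ℂ) • ((((1 + (ε/2) * z : ℝ)) : ℂ) •
          Matrix.vecMulVec (fun i => (s : ℂ) * v i + (δ : ℂ) * u i)
            (star (fun i => (s : ℂ) * v i + (δ : ℂ) * u i)) +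
        (((1 - (1 - ε/2) * z : ℝ)) : ℂ) • Matrix.vecMulVec v (star v)))).PosSemidef := by
  set w : Fin 2 → ℂ := fun i => (s : ℂ) * v i + (δ : ℂ) * u i with hwdef
  have hmv : ∀ a x : Fin 2 → ℂ, (Matrix.vecMulVec a (star a)) *ᵥ x = (star a ⬝ᵥ x) • a := by
    intro a x; funext i
    simp only [Matrix.mulVec, dotProduct, Matrix.vecMulVec_apply, Pi.smul_apply,
      smul_eq_mul, Finset.sum_mul]
    exact Finset.sum_congr rfl fun j _ => by simp [Pi.star_apply]; ring
  have hherm : ∀ a : Fin 2 → ℂ, (Matrix.vecMulVec a (star a)).IsHermitian := by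
    intro a; ext i j
    simp [Matrix.conjTranspose_apply, Matrix.vecMulVec_apply, mul_comm]
  have hsmul : ∀ (r : ℝ) (A : Matrix (Fin 2) (Fin 2) ℂ), A.IsHermitian →
      ((r:ℂ) • A).IsHermitian := by
    intro r A hA
    show ((r:ℂ) • A)ᴴ = (r:ℂ) • A
    rw [Matrix.conjTranspose_smul, hA.eq, Complex.star_def, Complex.conj_ofReal]
  have hsp : ∀ t : ℂ, star t * t = (Complex.normSq t : ℂ) := fun t => by
    rw [Complex.star_def, mul_comm, Complex.mul_conj]
  rw [Matrix.posSemidef_iff_dotProduct_mulVec]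
  constructor
  · apply Matrix.IsHermitian.sub
    · exact hsmul _ _ (Matrix.isHermitian_one.sub (hherm v))
    · exact hsmul _ _ ((hsmul _ _ (hherm w)).add (hsmul _ _ (hherm v)))
  · intro x
    set p : ℂ := star v ⬝ᵥ x with hpdef
    set q : ℂ := star u ⬝ᵥ x with hqdef
    set N : ℂ := star x ⬝ᵥ x with hNdef
    have hvu2 : star u ⬝ᵥ v = 0 := by
      rw [Matrix.star_dotProduct, hvu, star_zero]
    have hxv : star x ⬝ᵥ v = star p := by rw [hpdef, Matrix.star_dotProduct]
    have hxu : star x ⬝ᵥ u = star q := by rw [hqdef, Matrix.star_dotProduct]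
    have hstarw : star w = (s:ℂ) • star v + (δ:ℂ) • star u := by
      funext i
      simp [hwdef, Pi.star_apply, star_add, star_mul', Complex.conj_ofReal]
    have hwx : star w ⬝ᵥ x = (s:ℂ) * p + (δ:ℂ) * q := by
      rw [hstarw, add_dotProduct, smul_dotProduct, smul_dotProduct]
      simp [hpdef, hqdef]
    have hxw : star x ⬝ᵥ w = (s:ℂ) * star p + (δ:ℂ) * star q := by
      rw [Matrix.star_dotProduct, hwx]
      simp only [star_add, star_mul', Complex.star_def, Complex.conj_ofReal]
      try ring
    -- real components
    set P2 : ℝ := Complex.normSq p with hP2def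
    set Q2 : ℝ := Complex.normSq q with hQ2def
    set r : ℝ := p.re * q.re + p.im * q.im with hrdef
    set NR : ℝ := N.re with hNRdef
    have hP2 : 0 ≤ P2 := Complex.normSq_nonneg p
    have hQ2 : 0 ≤ Q2 := Complex.normSq_nonneg q
    have hr : r^2 ≤ P2*Q2 := by
      rw [hrdef, hP2def, hQ2def, Complex.normSq_apply, Complex.normSq_apply]
      nlinarith [sq_nonneg (p.re*q.im - p.im*q.re)]
    -- N is real
    have hNs : N = star N := Matrix.star_dotProduct x x
    have hNreal : N = (NR : ℂ) := (Complex.conj_eq_iff_re.mp hNs.symm).symm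
    -- Bessel
    have hyy : star (x - p • v - q • u) ⬝ᵥ (x - p • v - q • u)
        = N - star p * p - star q * q := by
      simp only [star_sub, star_smul, sub_dotProduct, dotProduct_sub,
        smul_dotProduct, dotProduct_smul, smul_eq_mul, hv, hu, hvu, hvu2,
        hxv, hxu, ← hpdef, ← hqdef, ← hNdef]
      ring
    have hbes0 : (0:ℂ) ≤ ((NR - P2 - Q2 : ℝ) : ℂ) := by
      have h0 := dotProduct_star_self_nonneg (x - p • v - q • u)
      rw [hyy, hsp, hsp, hNreal] at h0
      convert h0 using 1
      push_cast; ring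
    have hbes : P2 + Q2 ≤ NR := by
      have := Complex.zero_le_real.mp hbes0
      linarith
    -- normSq of the w-component
    have hW2 : Complex.normSq ((s:ℂ)*p + (δ:ℂ)*q) = s^2*P2 + δ^2*Q2 + 2*(s*δ)*r := by
      rw [hP2def, hQ2def, hrdef]
      simp [Complex.normSq_apply, Complex.add_re, Complex.add_im, Complex.mul_re,
        Complex.mul_im, Complex.ofReal_re, Complex.ofReal_im]
      ring
    -- main computation
    rw [Matrix.sub_mulVec, Matrix.smul_mulVec, Matrix.sub_mulVec, Matrix.one_mulVec,
      Matrix.smul_mulVec, Matrix.add_mulVec, Matrix.smul_mulVec,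
      Matrix.smul_mulVec, hmv, hmv]
    simp only [dotProduct_sub, dotProduct_add, dotProduct_smul,
      smul_eq_mul, hwx, ← hpdef, ← hNdef, hxv, hxw]
    have hfin : ((4 * δ^2 * ((1/2) * (1 + ε * z_b)) : ℝ) : ℂ) * (N - star p * p)
          - ((1/4 : ℝ) : ℂ) * ((((1 + (ε/2) * z : ℝ)) : ℂ) *
              ((((s:ℂ) * p + (δ:ℂ) * q)) * ((s:ℂ) * star p + (δ:ℂ) * star q))
            + (((1 - (1 - ε/2) * z : ℝ)) : ℂ) * (p * star p))
        = ((4*δ^2*((1/2)*(1+ε*z_b))*NR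
        - (4*δ^2*((1/2)*(1+ε*z_b)) + (1/4)*(1-(1-ε/2)*z))*P2
        - ((1/4)*(1+(ε/2)*z))*(s^2*P2 + δ^2*Q2 + 2*(s*δ)*r) : ℝ) : ℂ) := by
      have hcross : ((s:ℂ) * p + (δ:ℂ) * q) * ((s:ℂ) * star p + (δ:ℂ) * star q)
          = ((Complex.normSq ((s:ℂ)*p + (δ:ℂ)*q) : ℝ) : ℂ) := by
        rw [← hsp]
        simp only [star_add, star_mul', Complex.star_def, Complex.conj_ofReal]
        try ring
      rw [hcross, hNreal, hW2, show p * star p = star p * p from mul_comm _ _, hsp]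
      push_cast
      ring
    calc (0:ℂ) ≤ ((4*δ^2*((1/2)*(1+ε*z_b))*NR
        - (4*δ^2*((1/2)*(1+ε*z_b)) + (1/4)*(1-(1-ε/2)*z))*P2
        - ((1/4)*(1+(ε/2)*z))*(s^2*P2 + δ^2*Q2 + 2*(s*δ)*r) : ℝ) : ℂ) :=
          Complex.zero_le_real.mpr (hreal P2 Q2 NR r hP2 hQ2 hr hbes)
      _ = _ := by rw [← hfin]; ring

/-- Inequality (6) of Claim 3.2: with `ρ₀ = |ρ₀⟩⟨ρ₀|`, `ρ₁ = |ρ₁⟩⟨ρ₁|` rank-1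
density matrices on ℂ², `|ρ₀⟩ = √(1-δ²)|ρ₁⟩ + δ|ρ₁⊥⟩`, `ρ₁⊥ = I - ρ₁`, and
`z = 16((1-ε)/(1-ε/2))z_b + 4/(1-ε)`, one has
`4δ²·ρ₁⊥·(1/2)(1+εz_b) ⪰ (1/4)[(1+(ε/2)z)ρ₀ + (1-(1-ε/2)z)ρ₁]`. -/
theorem stmt_9 (δ ε z_b z : ℝ)
    (hδ0 : 0 ≤ δ) (hδ1 : δ ≤ 1) (hε0 : 0 ≤ ε) (hε1 : ε < 1/2) (hzb : 0 ≤ z_b)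
    (hz : z = 16 * ((1 - ε) / (1 - ε/2)) * z_b + 4 / (1 - ε))
    (v u : Fin 2 → ℂ)
    (hv : star v ⬝ᵥ v = 1) (hu : star u ⬝ᵥ u = 1) (hvu : star v ⬝ᵥ u = 0) :
    let ρ₁ : Matrix (Fin 2) (Fin 2) ℂ := Matrix.vecMulVec v (star v)
    let w : Fin 2 → ℂ := fun i => (Real.sqrt (1 - δ^2) : ℂ) * v i + (δ : ℂ) * u i
    let ρ₀ : Matrix (Fin 2) (Fin 2) ℂ := Matrix.vecMulVec w (star w)
    let ρ₁perp : Matrix (Fin 2) (Fin 2) ℂ := 1 - ρ₁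
    (((4 * δ^2 * ((1/2) * (1 + ε * z_b)) : ℝ) : ℂ) • ρ₁perp -
      (((1/4 : ℝ) : ℂ) • ((((1 + (ε/2) * z : ℝ)) : ℂ) • ρ₀ +
        (((1 - (1 - ε/2) * z : ℝ)) : ℂ) • ρ₁))).PosSemidef := by
  intro ρ₁ w ρ₀ ρ₁perp
  have hd2 : (0:ℝ) ≤ 1 - δ^2 := by nlinarith [sq_nonneg δ]
  exact complexkey δ ε z_b z (Real.sqrt (1 - δ^2)) v u hv hu hvu
    (fun P2 Q2 NR r h1 h2 h3 h4 =>
      realkey δ ε z_b z P2 Q2 NR r (Real.sqrt (1 - δ^2)) hδ0 hδ1 hε0 hε1 hzb hz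
        (Real.sqrt_nonneg _) (Real.sq_sqrt hd2) h1 h2 h3 h4)
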